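/- arXiv:2209.11443 — 4 statements merged into one kernel-verified Lean document; each statement's English description precedes it below -/
import Mathlib

section
/- Let p be a prime, k, ℓ ≥ 1 integers, ζ a primitive complex p^k-th root of unity, and let A be a matrix with entries in T_ℓ^k = ℤ[ζ][z]/⟨(z−1)^ℓ⟩. Then rank_{ℚ(ζ)}(A) ≥ rank_{F_p}(ψ_{p^k}(A)), where ψ_{p^k}(A) is the matrix over F_p[z]/⟨(z−1)^ℓ⟩ obtained by applying ψ_{p^k} entrywise. -/
set_option linter.unusedSectionVars false
set_option maxHeartbeats 1000000
set_option synthInstance.maxHeartbeats 400000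



/-- The ring `R[z]/⟨(z−1)^ℓ⟩`. -/
abbrev Tq (R : Type*) [CommRing R] (ℓ : ℕ) : Type _ :=
  Polynomial R ⧸ Ideal.span {((Polynomial.X - 1) ^ ℓ : Polynomial R)}

/-- The quotient map `R[z] → R[z]/⟨(z−1)^ℓ⟩`. -/
noncomputable def TqMk (R : Type*) [CommRing R] (ℓ : ℕ) : Polynomial R →+* Tq R ℓ :=
  Ideal.Quotient.mk _

/-- The `F`-rank of a matrix with entries in an `F`-module (e.g. `F[z]/⟨f(z)⟩`):
the maximal number of `F`-linearly independent columns, i.e. the dimension of the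
`F`-span of its columns. -/
noncomputable def colRank (F : Type*) [DivisionRing F] {V : Type*} [AddCommGroup V]
    [Module F V] {I J : Type*} (M : Matrix I J V) : ℕ :=
  Module.finrank F (Submodule.span F (Set.range fun j => fun i => M i j))

/- `K = ℚ(ζ)` is realized as a characteristic-zero field generated over `ℚ` by a primitive
`p^k`-th root of unity `ζ`; `ℤ(ζ) = ℤ[ζ]` is `Algebra.adjoin ℤ {ζ}`.  The map
`φ : T_ℓ^k → ℚ(ζ)[z]/⟨(z−1)^ℓ⟩` is the canonical inclusion (characterized by `hφC`, `hφX`),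
and `ψ = ψ_{p^k}` is characterized by sending `ζ ↦ 1` and `z ↦ z` (its behaviour on `ℤ`
is automatic for a ring homomorphism). -/
open Polynomial

section helpers
variable {Rr S : Type*} [CommRing Rr] [CommRing S]

lemma monic_XsubOne_pow (T : Type*) [CommRing T] (ℓ : ℕ) : ((X - 1 : T[X]) ^ ℓ).Monic := by
  have : (X - 1 : T[X]) = X - C 1 := by simp
  rw [this]
  exact (monic_X_sub_C (1 : T)).pow _

lemma TqMk_comp_eq (ℓ : ℕ) (f : Tq Rr ℓ →+* Tq S ℓ) (σ : Rr →+* S)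
    (hC : ∀ x, f (TqMk Rr ℓ (C x)) = TqMk S ℓ (C (σ x)))
    (hX : f (TqMk Rr ℓ X) = TqMk S ℓ X) :
    ∀ g : Rr[X], f (TqMk Rr ℓ g) = TqMk S ℓ (g.map σ) := by
  have h : f.comp (TqMk Rr ℓ) = (TqMk S ℓ).comp (mapRingHom σ) := by
    apply Polynomial.ringHom_ext
    · intro a
      simp only [RingHom.comp_apply, coe_mapRingHom, map_C]
      exact hC a
    · simp only [RingHom.comp_apply, coe_mapRingHom, map_X]
      exact hX
  intro g
  have := RingHom.congr_fun h g
  simpa using this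

lemma Tq_injective [Nontrivial Rr] (ℓ : ℕ) {σ : Rr →+* S} (hσ : Function.Injective σ)
    (f : Tq Rr ℓ →+* Tq S ℓ)
    (hf : ∀ g : Rr[X], f (TqMk Rr ℓ g) = TqMk S ℓ (g.map σ)) :
    Function.Injective f := by
  rw [injective_iff_map_eq_zero]
  intro a ha
  obtain ⟨g, rfl⟩ : ∃ g, TqMk Rr ℓ g = a := Ideal.Quotient.mk_surjective a
  set q : Rr[X] := (X - 1 : Rr[X]) ^ ℓ with hqdef
  have hq : q.Monic := monic_XsubOne_pow Rr ℓ
  have h1 : TqMk Rr ℓ g = TqMk Rr ℓ (g %ₘ q) := by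
    rw [TqMk, Ideal.Quotient.mk_eq_mk_iff_sub_mem, Ideal.mem_span_singleton]
    refine ⟨g /ₘ q, ?_⟩
    show g - g %ₘ q = q * (g /ₘ q)
    nth_rewrite 1 [← modByMonic_add_div g q]
    ring
  rw [h1] at ha ⊢
  rw [hf] at ha
  have hmem : (g %ₘ q).map σ ∈ Ideal.span {((X - 1 : S[X]) ^ ℓ)} :=
    (Ideal.Quotient.eq_zero_iff_mem).1 ha
  rw [Ideal.mem_span_singleton] at hmem
  have hz : (g %ₘ q).map σ = 0 := by
    obtain ⟨c, hc⟩ := hmem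
    rcases eq_or_ne c 0 with rfl | hc0
    · simpa using hc
    · exfalso
      have hmonS : ((X - 1 : S[X]) ^ ℓ).Monic := monic_XsubOne_pow S ℓ
      have hdeg : ((g %ₘ q).map σ).degree = c.degree + ((X - 1 : S[X]) ^ ℓ).degree := by
        rw [hc, mul_comm, hmonS.degree_mul]
      have hge : ((X - 1 : S[X]) ^ ℓ).degree ≤ ((g %ₘ q).map σ).degree := by
        rw [hdeg]
        exact le_add_of_nonneg_left (Polynomial.zero_le_degree_iff.mpr hc0)
      have hlt : ((g %ₘ q).map σ).degree < ((X - 1 : S[X]) ^ ℓ).degree := by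
        have hmapq : q.map σ = (X - 1 : S[X]) ^ ℓ := by
          simp [hqdef, Polynomial.map_pow]
        calc ((g %ₘ q).map σ).degree = (g %ₘ q).degree := degree_map_eq_of_injective hσ _
          _ < q.degree := degree_modByMonic_lt g hq
          _ = ((X - 1 : S[X]) ^ ℓ).degree := by rw [← hmapq, degree_map_eq_of_injective hσ]
      exact absurd hge (not_le.mpr hlt)
  have : g %ₘ q = 0 := Polynomial.map_injective σ hσ (by simpa using hz)
  rw [this]
  simp [TqMk]

end helpers

lemma smul_TqMk (T : Type*) [CommRing T] (ℓ : ℕ) (a : T) (y : Tq T ℓ) :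
    a • y = TqMk T ℓ (C a) * y := by
  obtain ⟨g, rfl⟩ : ∃ g, TqMk T ℓ g = y := Ideal.Quotient.mk_surjective y
  have h : a • (Ideal.Quotient.mk _ g : Tq T ℓ) = Ideal.Quotient.mk _ (a • g) := rfl
  rw [TqMk, h, ← map_mul]
  congr 1
  rw [Polynomial.smul_eq_C_mul]

section arith

variable {p k : ℕ} [Fact p.Prime] {K : Type} [Field K] [CharZero K] (ζ : K)

noncomputable abbrev zz : ↥(Algebra.adjoin ℤ {ζ}) :=
  ⟨ζ, Algebra.subset_adjoin (Set.mem_singleton ζ)⟩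

lemma adjoin_zz_top : Algebra.adjoin ℤ ({zz ζ} : Set ↥(Algebra.adjoin ℤ {ζ})) = ⊤ := by
  have h := Algebra.adjoin_adjoin_coe_preimage (R := ℤ) (s := ({ζ} : Set K))
  convert h using 2
  ext x
  simp [Subtype.ext_iff, eq_comm]

lemma exists_int_sub_mem (x : ↥(Algebra.adjoin ℤ {ζ})) :
    ∃ n : ℤ, x - (n : ↥(Algebra.adjoin ℤ {ζ})) ∈ Ideal.span {zz ζ - 1} := by
  have hx : x ∈ Algebra.adjoin ℤ ({zz ζ} : Set ↥(Algebra.adjoin ℤ {ζ})) := by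
    rw [adjoin_zz_top]; trivial
  induction hx using Algebra.adjoin_induction with
  | mem w hw =>
      rcases Set.mem_singleton_iff.mp hw with rfl
      exact ⟨1, by simpa using Ideal.mem_span_singleton_self _⟩
  | algebraMap n => exact ⟨n, by simp⟩
  | add x y hx hy ihx ihy =>
      obtain ⟨a, ha⟩ := ihx; obtain ⟨b, hb⟩ := ihy
      refine ⟨a + b, ?_⟩
      push_cast
      convert add_mem ha hb using 1
      ring
  | mul x y hx hy ihx ihy =>
      obtain ⟨a, ha⟩ := ihx; obtain ⟨b, hb⟩ := ihy
      refine ⟨a * b, ?_⟩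
      push_cast
      convert add_mem (Ideal.mul_mem_left _ x hb)
        (Ideal.mul_mem_right ((b : ↥(Algebra.adjoin ℤ {ζ}))) _ ha) using 1
      ring

lemma zz_primitive (hζ : IsPrimitiveRoot ζ (p ^ k)) : IsPrimitiveRoot (zz ζ) (p ^ k) := by
  apply IsPrimitiveRoot.of_map_of_injective (f := (Algebra.adjoin ℤ {ζ}).val)
  · exact hζ
  · exact Subtype.coe_injective

lemma p_mem_span (hk : 1 ≤ k) (hζ : IsPrimitiveRoot ζ (p ^ k)) :
    ((p : ↥(Algebra.adjoin ℤ {ζ}))) ∈ Ideal.span {zz ζ - 1} := by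
  obtain ⟨k', rfl⟩ : ∃ k', k = k' + 1 := ⟨k - 1, (Nat.succ_pred_eq_of_pos hk).symm⟩
  have hz := zz_primitive ζ hζ
  have hdom : IsRoot (cyclotomic (p ^ (k' + 1)) ↥(Algebra.adjoin ℤ {ζ})) (zz ζ) :=
    hz.isRoot_cyclotomic (pow_pos (Fact.out : p.Prime).pos _)
  have h1 : eval (1 : ↥(Algebra.adjoin ℤ {ζ})) (cyclotomic (p ^ (k' + 1)) _) =
      (p : ↥(Algebra.adjoin ℤ {ζ})) := eval_one_cyclotomic_prime_pow _
  have hdvd := Polynomial.sub_dvd_eval_sub (zz ζ) 1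
    (cyclotomic (p ^ (k' + 1)) ↥(Algebra.adjoin ℤ {ζ}))
  rw [hdom.eq_zero, h1, zero_sub] at hdvd
  rw [Ideal.mem_span_singleton]
  exact (dvd_neg).mp hdvd

lemma ker_psi0 (hk : 1 ≤ k) (hζ : IsPrimitiveRoot ζ (p ^ k))
    (ψ₀ : ↥(Algebra.adjoin ℤ {ζ}) →+* ZMod p) (hψ₀ : ψ₀ (zz ζ) = 1) :
    RingHom.ker ψ₀ = Ideal.span {zz ζ - 1} := by
  apply le_antisymm
  · intro x hx
    rw [RingHom.mem_ker] at hx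
    obtain ⟨n, hn⟩ := exists_int_sub_mem ζ x
    have hsub : ψ₀ (x - (n : ↥(Algebra.adjoin ℤ {ζ}))) = 0 := by
      have h : Ideal.span {zz ζ - 1} ≤ RingHom.ker ψ₀ := by
        rw [Ideal.span_le, Set.singleton_subset_iff]
        simp [RingHom.mem_ker, hψ₀]
      exact h hn
    have hcast : ((n : ZMod p)) = 0 := by
      have h2 := map_intCast ψ₀ n
      rw [map_sub, hx, h2] at hsub
      simpa using hsub.symm
    obtain ⟨m, rfl⟩ := (ZMod.intCast_zmod_eq_zero_iff_dvd n p).mp hcast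
    have hpm : ((((p : ℤ) * m : ℤ)) : ↥(Algebra.adjoin ℤ {ζ})) ∈ Ideal.span {zz ζ - 1} := by
      push_cast
      exact Ideal.mul_mem_right _ _ (p_mem_span ζ hk hζ)
    have := add_mem hn hpm
    simpa using this
  · rw [Ideal.span_le, Set.singleton_subset_iff]
    simp [RingHom.mem_ker, hψ₀]

lemma irred_pi (hk : 1 ≤ k) (hζ : IsPrimitiveRoot ζ (p ^ k))
    (ψ₀ : ↥(Algebra.adjoin ℤ {ζ}) →+* ZMod p) (hψ₀ : ψ₀ (zz ζ) = 1) :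
    Irreducible (zz ζ - 1) := by
  have hone : 1 < p ^ k := Nat.one_lt_pow (by omega) (Fact.out : p.Prime).one_lt
  have hne : zz ζ - 1 ≠ 0 := by
    rw [sub_ne_zero]
    intro h
    exact hζ.ne_one hone (by simpa [Subtype.ext_iff] using h)
  have hsurj : Function.Surjective ψ₀ := by
    intro c
    obtain ⟨n, rfl⟩ := ZMod.intCast_surjective c
    exact ⟨(n : ↥(Algebra.adjoin ℤ {ζ})), map_intCast ψ₀ n⟩
  have hmax : (RingHom.ker ψ₀).IsMaximal := RingHom.ker_isMaximal_of_surjective ψ₀ hsurj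
  rw [ker_psi0 ζ hk hζ ψ₀ hψ₀] at hmax
  exact ((Ideal.span_singleton_prime hne).mp hmax.isPrime).irreducible

lemma noeth (hζ : IsPrimitiveRoot ζ (p ^ k)) : IsNoetherianRing ↥(Algebra.adjoin ℤ {ζ}) := by
  have hint : IsIntegral ℤ ζ := hζ.isIntegral (pow_pos (Fact.out : p.Prime).pos _)
  haveI : Module.Finite ℤ ↥(Algebra.adjoin ℤ {ζ}) :=
    ⟨(Submodule.fg_top _).mpr hint.fg_adjoin_singleton⟩
  exact isNoetherianRing_iff.mpr
    (isNoetherian_of_tower ℤ (isNoetherian_of_isNoetherianRing_of_finite ℤ _))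

lemma exists_denom (hK : Algebra.adjoin ℚ {ζ} = ⊤) (x : K) :
    ∃ (n : ℤ) (r : ↥(Algebra.adjoin ℤ {ζ})), n ≠ 0 ∧ (n : K) * x = (r : K) := by
  have hx : x ∈ Algebra.adjoin ℚ ({ζ} : Set K) := by rw [hK]; trivial
  induction hx using Algebra.adjoin_induction with
  | mem w hw =>
      rcases Set.mem_singleton_iff.mp hw with rfl
      exact ⟨1, ⟨_, Algebra.subset_adjoin (Set.mem_singleton _)⟩, one_ne_zero, by simp⟩
  | algebraMap q =>
      refine ⟨(q.den : ℤ), ⟨(q.num : K), ?_⟩, ?_, ?_⟩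
      · exact intCast_mem _ _
      · exact_mod_cast q.den_nz
      · show ((q.den : ℤ) : K) * algebraMap ℚ K q = ((q.num : K))
        have hden : ((q.den : K)) ≠ 0 := by
          exact_mod_cast (Nat.cast_ne_zero (R := K)).mpr q.den_nz
        rw [show algebraMap ℚ K q = ((q : ℚ) : K) from rfl, Rat.cast_def]
        push_cast
        field_simp
  | add x y hx hy ihx ihy =>
      obtain ⟨n₁, r₁, hn₁, h₁⟩ := ihx
      obtain ⟨n₂, r₂, hn₂, h₂⟩ := ihy
      refine ⟨n₁ * n₂, (n₂ : ↥(Algebra.adjoin ℤ {ζ})) * r₁ + (n₁ : ↥(Algebra.adjoin ℤ {ζ})) * r₂,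
        mul_ne_zero hn₁ hn₂, ?_⟩
      push_cast
      linear_combination (n₂ : K) * h₁ + (n₁ : K) * h₂
  | mul x y hx hy ihx ihy =>
      obtain ⟨n₁, r₁, hn₁, h₁⟩ := ihx
      obtain ⟨n₂, r₂, hn₂, h₂⟩ := ihy
      refine ⟨n₁ * n₂, r₁ * r₂, mul_ne_zero hn₁ hn₂, ?_⟩
      push_cast
      linear_combination (n₂ : K) * y * h₁ + (r₁ : K) * h₂

end arith

theorem keyLI (p k ℓ : ℕ) [Fact p.Prime] (hk : 1 ≤ k) (hl : 1 ≤ ℓ)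
    (K : Type) [Field K] [CharZero K] (ζ : K) (hζ : IsPrimitiveRoot ζ (p ^ k))
    (hK : Algebra.adjoin ℚ {ζ} = ⊤)
    (I : Type) (ι : Type) [Fintype ι]
    (B : ι → I → Tq ↥(Algebra.adjoin ℤ {ζ}) ℓ)
    (φ : Tq ↥(Algebra.adjoin ℤ {ζ}) ℓ →+* Tq K ℓ)
    (hφC : ∀ x : ↥(Algebra.adjoin ℤ {ζ}),
      φ (TqMk _ ℓ (Polynomial.C x)) = TqMk K ℓ (Polynomial.C (x : K)))
    (hφX : φ (TqMk _ ℓ Polynomial.X) = TqMk K ℓ Polynomial.X)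
    (ψ : Tq ↥(Algebra.adjoin ℤ {ζ}) ℓ →+* Tq (ZMod p) ℓ)
    (hψζ : ψ (TqMk _ ℓ (Polynomial.C (zz ζ))) = 1)
    (hψX : ψ (TqMk _ ℓ Polynomial.X) = TqMk (ZMod p) ℓ Polynomial.X)
    (hind : LinearIndependent (ZMod p) fun x : ι => fun i => ψ (B x i)) :
    LinearIndependent K fun x : ι => fun i => φ (B x i) := by
  classical
  -- the evaluation-at-1 map and ψ₀
  have hεcond : Ideal.span {((X - 1 : (ZMod p)[X])) ^ ℓ} ≤
      RingHom.ker (evalRingHom (1 : ZMod p)) := by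
    rw [Ideal.span_le, Set.singleton_subset_iff]
    simp only [SetLike.mem_coe, RingHom.mem_ker, coe_evalRingHom, eval_pow, eval_sub, eval_X,
      eval_one, sub_self]
    exact zero_pow (by omega)
  let ε : Tq (ZMod p) ℓ →+* ZMod p :=
    Ideal.Quotient.lift _ (evalRingHom 1) (fun a ha => hεcond ha)
  let ψ₀ : ↥(Algebra.adjoin ℤ {ζ}) →+* ZMod p :=
    ε.comp (ψ.comp ((TqMk ↥(Algebra.adjoin ℤ {ζ}) ℓ).comp (C : _ →+* _)))
  have hψ₀z : ψ₀ (zz ζ) = 1 := by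
    show ε (ψ (TqMk _ ℓ (C (zz ζ)))) = 1
    rw [hψζ, map_one]
  -- ψ on constants
  have hψconst : ∀ b : ↥(Algebra.adjoin ℤ {ζ}),
      ψ (TqMk _ ℓ (C b)) = TqMk (ZMod p) ℓ (C (ψ₀ b)) := by
    intro b
    have hb : b ∈ Algebra.adjoin ℤ ({zz ζ} : Set ↥(Algebra.adjoin ℤ {ζ})) := by
      rw [adjoin_zz_top]; trivial
    induction hb using Algebra.adjoin_induction with
    | mem w hw =>
        rcases Set.mem_singleton_iff.mp hw with rfl
        rw [hψζ, hψ₀z]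
        simp
    | algebraMap n =>
        have h1 : (algebraMap ℤ ↥(Algebra.adjoin ℤ {ζ}) n) = (n : ↥(Algebra.adjoin ℤ {ζ})) := by
          simp
        rw [h1, Polynomial.C_eq_intCast, map_intCast, map_intCast, map_intCast ψ₀,
          Polynomial.C_eq_intCast, map_intCast]
    | add x y hx hy ihx ihy =>
        rw [Polynomial.C_add, map_add, map_add, ihx, ihy, map_add ψ₀, Polynomial.C_add, map_add]
    | mul x y hx hy ihx ihy =>
        rw [Polynomial.C_mul, map_mul, map_mul, ihx, ihy, map_mul ψ₀, Polynomial.C_mul, map_mul]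
  -- injectivity of φ
  haveI : Nontrivial ↥(Algebra.adjoin ℤ {ζ}) :=
    ⟨⟨0, 1, fun h => zero_ne_one (α := K) (by simpa [Subtype.ext_iff] using h)⟩⟩
  have hφmap : ∀ g, φ (TqMk _ ℓ g) =
      TqMk K ℓ (g.map ((Algebra.adjoin ℤ {ζ}).val.toRingHom)) := by
    apply TqMk_comp_eq ℓ φ
    · intro a; exact hφC a
    · exact hφX
  have hφinj : Function.Injective φ :=
    Tq_injective ℓ (fun a b h => Subtype.coe_injective h) φ hφmap
  -- main argument
  rw [Fintype.linearIndependent_iff] at hind ⊢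
  intro c hc
  by_contra hne
  push_neg at hne
  obtain ⟨x₀, hx₀⟩ := hne
  have hci : ∀ i, ∑ x, c x • φ (B x i) = 0 := by
    intro i
    have h := congrFun hc i
    simpa [Finset.sum_apply] using h
  choose nn rr hnn hrr using fun x : ι => exists_denom ζ hK (c x)
  set N : ℤ := ∏ x, nn x with hNdef
  have hN : N ≠ 0 := Finset.prod_ne_zero_iff.mpr fun x _ => hnn x
  set r' : ι → ↥(Algebra.adjoin ℤ {ζ}) :=
    fun x => ((∏ y ∈ Finset.univ.erase x, nn y : ℤ) : ↥(Algebra.adjoin ℤ {ζ})) * rr x with hr'def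
  have hr' : ∀ x, (N : K) * c x = (r' x : K) := by
    intro x
    have h1 : N = nn x * ∏ y ∈ Finset.univ.erase x, nn y :=
      (Finset.mul_prod_erase _ _ (Finset.mem_univ x)).symm
    calc (N : K) * c x
        = ((∏ y ∈ Finset.univ.erase x, nn y : ℤ) : K) * ((nn x : K) * c x) := by
          rw [h1]; push_cast; ring
      _ = ((∏ y ∈ Finset.univ.erase x, nn y : ℤ) : K) * (rr x : K) := by rw [hrr x]
      _ = (r' x : K) := by
          rw [hr'def]
          push_cast
          ring
  have hrne : r' x₀ ≠ 0 := by
    intro h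
    apply hx₀
    have h2 : (N : K) * c x₀ = 0 := by rw [hr' x₀, h]; simp
    rcases mul_eq_zero.mp h2 with h3 | h3
    · exact absurd h3 (Int.cast_ne_zero.mpr hN)
    · exact h3
  set π : ↥(Algebra.adjoin ℤ {ζ}) := zz ζ - 1 with hπdef
  have hirr : Irreducible π := irred_pi ζ hk hζ ψ₀ hψ₀z
  haveI := noeth (p := p) (k := k) ζ hζ
  haveI : WfDvdMonoid ↥(Algebra.adjoin ℤ {ζ}) := IsNoetherianRing.wfDvdMonoid
  obtain ⟨n₀, a₀, ha₀, hfac⟩ := WfDvdMonoid.max_power_factor hrne hirr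
  have hπ0 : π ≠ 0 := hirr.ne_zero
  have hn₀1 : ¬ (π ^ (n₀ + 1) ∣ r' x₀) := by
    rintro ⟨d, hd⟩
    apply ha₀
    have h4 : π ^ n₀ * a₀ = π ^ n₀ * (π * d) := by rw [← hfac, hd]; ring
    exact ⟨d, mul_left_cancel₀ (pow_ne_zero _ hπ0) h4⟩
  set P : ℕ → Prop := fun m => ∀ x, π ^ m ∣ r' x with hPdef
  have hP0 : P 0 := fun x => by simp
  set m : ℕ := Nat.findGreatest P n₀ with hmdef
  have hm : P m := Nat.findGreatest_spec (P := P) (Nat.zero_le _) hP0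
  have hmlt : ¬ P (m + 1) := by
    intro hcon
    rcases le_or_gt (m + 1) n₀ with h | h
    · exact Nat.findGreatest_is_greatest (Nat.lt_succ_self m) h hcon
    · exact hn₀1 (dvd_trans (pow_dvd_pow π (by omega)) (hcon x₀))
  have hmlt' : ∃ x, ¬ (π ^ (m + 1) ∣ r' x) := by
    by_contra hno
    push_neg at hno
    exact hmlt hno
  obtain ⟨x₁, hx₁⟩ := hmlt'
  choose b hb using hm
  have hbx₁ : ¬ (π ∣ b x₁) := by
    rintro ⟨d, hd⟩
    exact hx₁ ⟨d, by rw [hb x₁, hd]; ring⟩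
  have h2 : ∀ i, ∑ x, ((r' x : K)) • φ (B x i) = 0 := by
    intro i
    calc ∑ x, ((r' x : K)) • φ (B x i)
        = ∑ x, ((N : K) * c x) • φ (B x i) :=
          Finset.sum_congr rfl fun x _ => by rw [hr' x]
      _ = (N : K) • ∑ x, c x • φ (B x i) := by
          rw [Finset.smul_sum]
          exact Finset.sum_congr rfl fun x _ => by rw [smul_smul]
      _ = 0 := by rw [hci i, smul_zero]
  have h3 : ∀ i, ∑ x, ((b x : K)) • φ (B x i) = 0 := by
    intro i
    have hπK : (((π : K)) ^ m) ≠ 0 := by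
      apply pow_ne_zero
      intro h
      exact hπ0 (by exact_mod_cast ZeroMemClass.coe_eq_zero.mp (by exact_mod_cast h))
    have h5 : ((π : K)) ^ m • ∑ x, ((b x : K)) • φ (B x i) = 0 := by
      rw [Finset.smul_sum, ← h2 i]
      refine Finset.sum_congr rfl fun x _ => ?_
      rw [smul_smul]
      congr 1
      rw [hb x]
      push_cast
      ring
    have h6 := congrArg (fun t => (((π : K)) ^ m)⁻¹ • t) h5
    simpa [smul_smul, inv_mul_cancel₀ hπK] using h6
  have h4 : ∀ i, φ (∑ x, TqMk _ ℓ (C (b x)) * B x i) = 0 := by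
    intro i
    rw [map_sum, ← h3 i]
    refine Finset.sum_congr rfl fun x _ => ?_
    rw [map_mul, hφC (b x), ← smul_TqMk]
  have h5 : ∀ i, (∑ x, TqMk _ ℓ (C (b x)) * B x i) = 0 := fun i =>
    hφinj (by rw [h4 i, map_zero])
  have h6 : ∀ i, ∑ x, (ψ₀ (b x)) • ψ (B x i) = 0 := by
    intro i
    have h7 := congrArg ψ (h5 i)
    rw [map_sum, map_zero] at h7
    rw [← h7]
    refine Finset.sum_congr rfl fun x _ => ?_
    rw [map_mul, hψconst (b x), ← smul_TqMk]
  have h7 : ∑ x, (ψ₀ (b x)) • (fun i => ψ (B x i)) = 0 := by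
    funext i
    simpa [Finset.sum_apply] using h6 i
  have h8 := hind (fun x => ψ₀ (b x)) h7 x₁
  apply hbx₁
  rw [← Ideal.mem_span_singleton, hπdef, ← ker_psi0 ζ hk hζ ψ₀ hψ₀z]
  exact RingHom.mem_ker.mpr h8


theorem stmt9 (p k ℓ : ℕ) [Fact p.Prime] (hk : 1 ≤ k) (hl : 1 ≤ ℓ)
    (K : Type) [Field K] [CharZero K] (ζ : K) (hζ : IsPrimitiveRoot ζ (p ^ k))
    (hK : Algebra.adjoin ℚ {ζ} = ⊤)
    (I J : Type) [Fintype I] [Fintype J]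
    (A : Matrix I J (Tq ↥(Algebra.adjoin ℤ {ζ}) ℓ))
    (φ : Tq ↥(Algebra.adjoin ℤ {ζ}) ℓ →+* Tq K ℓ)
    (hφC : ∀ x : ↥(Algebra.adjoin ℤ {ζ}),
      φ (TqMk _ ℓ (Polynomial.C x)) = TqMk K ℓ (Polynomial.C (x : K)))
    (hφX : φ (TqMk _ ℓ Polynomial.X) = TqMk K ℓ Polynomial.X)
    (ψ : Tq ↥(Algebra.adjoin ℤ {ζ}) ℓ →+* Tq (ZMod p) ℓ)
    (hψζ : ψ (TqMk _ ℓ (Polynomial.C ⟨ζ, Algebra.subset_adjoin (Set.mem_singleton ζ)⟩)) = 1)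
    (hψX : ψ (TqMk _ ℓ Polynomial.X) = TqMk (ZMod p) ℓ Polynomial.X) :
    colRank (ZMod p) (A.map ψ) ≤ colRank K (A.map φ) := by
  classical
  unfold colRank
  set vψ : J → (I → Tq (ZMod p) ℓ) := fun j => fun i => (A.map ψ) i j with hvψ
  set vφ : J → (I → Tq K ℓ) := fun j => fun i => (A.map φ) i j with hvφ
  obtain ⟨t, hts, hspan, hli⟩ := exists_linearIndependent (ZMod p) (Set.range vψ)
  have htfin : t.Finite := (Set.finite_range vψ).subset hts
  haveI : Fintype t := htfin.fintype
  have hleft : Module.finrank (ZMod p) (Submodule.span (ZMod p) (Set.range vψ)) =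
      t.toFinset.card := by
    rw [← hspan, finrank_span_set_eq_card hli]
  have hchoice : ∀ x : t, ∃ j : J, vψ j = (x : I → Tq (ZMod p) ℓ) := fun x => hts x.2
  choose g hg using hchoice
  have hind : LinearIndependent (ZMod p) fun x : t => fun i => ψ (A i (g x)) := by
    have he : (fun x : t => fun i => ψ (A i (g x))) =
        fun x : t => (x : I → Tq (ZMod p) ℓ) := by
      funext x
      rw [← hg x]
      rfl
    rw [he]
    exact hli
  have hkey := keyLI p k ℓ hk hl K ζ hζ hK I t (fun x i => A i (g x)) φ hφC hφX ψ hψζ hψX hind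
  have hsub : Submodule.span K (Set.range fun x : t => fun i => φ (A i (g x))) ≤
      Submodule.span K (Set.range vφ) := by
    apply Submodule.span_mono
    rintro _ ⟨x, rfl⟩
    exact ⟨g x, rfl⟩
  haveI : FiniteDimensional K (Submodule.span K (Set.range vφ)) :=
    FiniteDimensional.span_of_finite K (Set.finite_range vφ)
  have h1 : Module.finrank K
      (Submodule.span K (Set.range fun x : t => fun i => φ (A i (g x)))) = Fintype.card t :=
    finrank_span_eq_card hkey
  calc Module.finrank (ZMod p) (Submodule.span (ZMod p) (Set.range vψ))
      = t.toFinset.card := hleft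
    _ = Fintype.card t := Set.toFinset_card t
    _ = Module.finrank K
        (Submodule.span K (Set.range fun x : t => fun i => φ (A i (g x)))) := h1.symm
    _ ≤ Module.finrank K (Submodule.span K (Set.range vφ)) := Submodule.finrank_mono hsub
end

section
/- Let p be a prime, k, ℓ, n ≥ 1 integers, ζ a primitive complex p^k-th root of unity. Let L = {a + λ·u : λ ∈ ℤ/p^kℤ} ⊆ (ℤ/p^kℤ)ⁿ be a line with a ∈ (ℤ/p^kℤ)ⁿ and u ∈ ℙ(ℤ/p^kℤ)^{n-1}, let u' ∈ ℤⁿ satisfy u' ≡ u (mod p^k), and let π : L → ℤ_{≥0} satisfy ∑_{x ∈ L} π(x) ≥ ℓ. Then there exist elements c_{λ,α} ∈ ℚ(ζ)[z] (depending on π, L, u') for λ ∈ ℤ/p^kℤ and α ∈ ℤ_{≥0}ⁿ with wt(α) < π(a + λu), such that for every polynomial f ∈ ℤ[x₁,…,x_n] the element ∑_{λ=0}^{p^k−1} ∑_{wt(α) < π(a+λu)} c_{λ,α} · f^{(α)}(ζ^{a+λu}) lies in ℤ[ζ][z]/⟨(z−1)^ℓ⟩ and ψ_{p^k} of it equals f(z^{u'})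 = f(z^{u'_1},…,z^{u'_n}) in F_p[z]/⟨(z−1)^ℓ⟩. -/
/-- A vector in `(ℤ/p^kℤ)ⁿ` is primitive, i.e. represents a direction in
`ℙ(ℤ/p^kℤ)^{n-1}` (some coordinate is a unit). -/
def IsPrimitiveVec {N n : ℕ} (u : Fin n → ZMod N) : Prop :=
  ∃ v : Fin n → ZMod N, ∑ i, v i * u i = 1

/-- The `j`-th (multivariate) Hasse derivative of `Q`. -/
noncomputable def mvHasseDeriv {F : Type*} [CommRing F] {n : ℕ} (j : Fin n →₀ ℕ)
    (Q : MvPolynomial (Fin n) F) : MvPolynomial (Fin n) F :=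
  ∑ v ∈ Q.support, MvPolynomial.monomial (v - j)
    (Q.coeff v * ((∏ i, (v i).choose (j i) : ℕ) : F))

/-- The finite set of exponent vectors `α ∈ ℤ_{≥0}ⁿ` with `wt(α) < d`. -/
noncomputable def degLT (n d : ℕ) : Finset (Fin n →₀ ℕ) :=
  (Finset.Iic (Finsupp.equivFunOnFinite.symm fun _ : Fin n => d)).filter
    fun α => (α.sum fun _ e => e) < d

/-- The ring `F_p[z]/⟨(z−1)^ℓ⟩`. -/
abbrev Tp (p ℓ : ℕ) : Type :=
  Polynomial (ZMod p) ⧸ Ideal.span {((Polynomial.X - 1) ^ ℓ : Polynomial (ZMod p))}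

namespace Stmt14Aux
open MvPolynomial
variable {R S : Type*} [CommRing R] [CommRing S] {n : ℕ}

lemma mvHasseDeriv_eq_sum (j : Fin n →₀ ℕ) (f : MvPolynomial (Fin n) R)
    (S : Finset (Fin n →₀ ℕ)) (hS : f.support ⊆ S) :
    mvHasseDeriv j f = ∑ v ∈ S, MvPolynomial.monomial (v - j)
      (f.coeff v * ((∏ i, (v i).choose (j i) : ℕ) : R)) := by
  rw [mvHasseDeriv]
  exact Finset.sum_subset hS (fun v _ hv => by
    rw [MvPolynomial.notMem_support_iff.mp hv, zero_mul, map_zero])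

lemma mvHasseDeriv_monomial (j v : Fin n →₀ ℕ) (c : R) :
    mvHasseDeriv j (monomial v c) =
      monomial (v - j) (c * ((∏ i, (v i).choose (j i) : ℕ) : R)) := by
  classical
  rw [mvHasseDeriv_eq_sum j _ {v} (MvPolynomial.support_monomial_subset)]
  rw [Finset.sum_singleton, MvPolynomial.coeff_monomial, if_pos rfl]

lemma mvHasseDeriv_add (j : Fin n →₀ ℕ) (f g : MvPolynomial (Fin n) R) :
    mvHasseDeriv j (f + g) = mvHasseDeriv j f + mvHasseDeriv j g := by
  classical
  rw [mvHasseDeriv_eq_sum j (f+g) (f.support ∪ g.support)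
      (MvPolynomial.support_add),
    mvHasseDeriv_eq_sum j f (f.support ∪ g.support) Finset.subset_union_left,
    mvHasseDeriv_eq_sum j g (f.support ∪ g.support) Finset.subset_union_right,
    ← Finset.sum_add_distrib]
  refine Finset.sum_congr rfl fun v _ => ?_
  rw [MvPolynomial.coeff_add, add_mul, map_add]

lemma mvHasseDeriv_smul (j : Fin n →₀ ℕ) (c : R) (f : MvPolynomial (Fin n) R) :
    mvHasseDeriv j (c • f) = c • mvHasseDeriv j f := by
  classical
  rw [mvHasseDeriv_eq_sum j (c • f) f.support (MvPolynomial.support_smul),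
    mvHasseDeriv, Finset.smul_sum]
  refine Finset.sum_congr rfl fun v _ => ?_
  rw [MvPolynomial.coeff_smul, smul_eq_mul, mul_assoc, MvPolynomial.smul_monomial,
    smul_eq_mul]

lemma mvHasseDeriv_map (φ : R →+* S) (j : Fin n →₀ ℕ) (f : MvPolynomial (Fin n) R) :
    mvHasseDeriv j (MvPolynomial.map φ f) = MvPolynomial.map φ (mvHasseDeriv j f) := by
  classical
  rw [mvHasseDeriv_eq_sum j (MvPolynomial.map φ f) f.support
      (MvPolynomial.support_map_subset φ f),
    mvHasseDeriv, map_sum]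
  refine Finset.sum_congr rfl fun v _ => ?_
  rw [MvPolynomial.coeff_map, MvPolynomial.map_monomial, map_mul φ, map_natCast φ]

lemma mvHasseDeriv_zero' (j : Fin n →₀ ℕ) :
    mvHasseDeriv j (0 : MvPolynomial (Fin n) R) = 0 := by
  rw [mvHasseDeriv_eq_sum j 0 ∅ (by simp), Finset.sum_empty]

lemma mvHasseDeriv_finsetSum {ι : Type*} (j : Fin n →₀ ℕ) (s : Finset ι)
    (g : ι → MvPolynomial (Fin n) R) :
    mvHasseDeriv j (∑ i ∈ s, g i) = ∑ i ∈ s, mvHasseDeriv j (g i) := by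
  classical
  induction s using Finset.induction_on with
  | empty => simpa using mvHasseDeriv_zero' j
  | insert _ _ hi ih => rw [Finset.sum_insert hi, Finset.sum_insert hi, mvHasseDeriv_add, ih]

open scoped Classical in
lemma coeff_prod_X_add_C (P : Fin n → R) (v : Fin n →₀ ℕ) (S : Finset (Fin n)) (α : Fin n →₀ ℕ) :
    MvPolynomial.coeff α (∏ i ∈ S, (X i + C (P i)) ^ v i) =
      if ∀ i, i ∉ S → α i = 0 then
        ∏ i ∈ S, (((v i).choose (α i) : R) * P i ^ (v i - α i)) else 0 := by
  induction S using Finset.induction_on generalizing α with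
  | empty =>
    simp only [Finset.prod_empty, MvPolynomial.coeff_one, Finset.notMem_empty]
    by_cases h : α = 0
    · subst h; simp
    · rw [if_neg (fun hh : (0 : Fin n →₀ ℕ) = α => h hh.symm),
        if_neg (fun h' : ∀ i : Fin n, ¬False → α i = 0 =>
          h (Finsupp.ext fun i => h' i not_false))]
  | @insert j S hj ih =>
    have key : ∀ (B : MvPolynomial (Fin n) R) (m : ℕ) (b : R) (β : Fin n →₀ ℕ),
        MvPolynomial.coeff β ((X j + C b) ^ m * B) = ∑ t ∈ Finset.range (m+1),
          (if Finsupp.single j t ≤ β then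
            MvPolynomial.coeff (β - Finsupp.single j t) B * (b ^ (m - t) * (m.choose t : R))
          else 0) := by
      intro B m b β
      rw [add_pow, Finset.sum_mul, MvPolynomial.coeff_sum]
      refine Finset.sum_congr rfl fun t _ => ?_
      have h1 : X j ^ t * C b ^ (m - t) * ((m.choose t : ℕ) : MvPolynomial (Fin n) R) * B
          = B * monomial (Finsupp.single j t) (b ^ (m-t) * (m.choose t : R)) := by
        have hCpow : MvPolynomial.C b ^ (m - t) =
            MvPolynomial.C (σ := Fin n) (b ^ (m - t)) :=
          (map_pow (MvPolynomial.C : R →+* MvPolynomial (Fin n) R) b (m-t)).symm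
        have hC : ((m.choose t : ℕ) : MvPolynomial (Fin n) R)
            = MvPolynomial.C ((m.choose t : ℕ) : R) :=
          (map_natCast (MvPolynomial.C : R →+* MvPolynomial (Fin n) R) (m.choose t)).symm
        rw [MvPolynomial.X_pow_eq_monomial, hCpow, hC,
          MvPolynomial.C_apply, MvPolynomial.C_apply,
          MvPolynomial.monomial_mul, MvPolynomial.monomial_mul, mul_comm]
        simp
      rw [h1, MvPolynomial.coeff_mul_monomial']
    rw [Finset.prod_insert hj, key]
    by_cases hmain : ∀ i, i ∉ insert j S → α i = 0
    · rw [if_pos hmain]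
      by_cases hm : α j ≤ v j
      · rw [Finset.sum_eq_single_of_mem (α j)
            (Finset.mem_range.mpr (Nat.lt_succ_of_le hm))]
        · have hle : Finsupp.single j (α j) ≤ α := Finsupp.single_le_iff.mpr le_rfl
          rw [if_pos hle, ih]
          have hcond : ∀ i, i ∉ S → (α - Finsupp.single j (α j)) i = 0 := by
            intro i hi
            rcases eq_or_ne i j with rfl | hij
            · rw [Finsupp.tsub_apply, Finsupp.single_apply, if_pos rfl, Nat.sub_self]
            · have h0 : α i = 0 := hmain i (by simp [Finset.mem_insert, hij, hi])
              rw [Finsupp.tsub_apply, Finsupp.single_apply,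
                if_neg (fun hh => hij hh.symm), h0]
              rfl
          rw [if_pos hcond, Finset.prod_insert hj]
          have hprod : ∏ i ∈ S,
              (((v i).choose ((α - Finsupp.single j (α j)) i) : R)
                * P i ^ (v i - (α - Finsupp.single j (α j)) i)) =
              ∏ i ∈ S, (((v i).choose (α i) : R) * P i ^ (v i - α i)) := by
            refine Finset.prod_congr rfl fun i hi => ?_
            have hij : i ≠ j := fun h => hj (h ▸ hi)
            rw [Finsupp.tsub_apply, Finsupp.single_apply,
              if_neg (fun hh => hij hh.symm)]
            simp
          rw [hprod]; ring
        · intro t ht hne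
          split_ifs with hle
          · rw [ih, if_neg, zero_mul]
            intro hcond
            have ht' : t ≤ α j := Finsupp.single_le_iff.mp hle
            have h0 := hcond j hj
            rw [Finsupp.tsub_apply, Finsupp.single_apply, if_pos rfl] at h0
            omega
          · rfl
      · have hR : ∏ i ∈ insert j S, (((v i).choose (α i) : R) * P i ^ (v i - α i)) = 0 := by
          rw [Finset.prod_insert hj, Nat.choose_eq_zero_of_lt (by omega),
            Nat.cast_zero, zero_mul, zero_mul]
        rw [hR]
        refine Finset.sum_eq_zero fun t ht => ?_
        split_ifs with hle
        · rw [ih, if_neg, zero_mul]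
          intro hcond
          have h0 := hcond j hj
          rw [Finsupp.tsub_apply, Finsupp.single_apply, if_pos rfl] at h0
          have ht1 : t ≤ α j := Finsupp.single_le_iff.mp hle
          have ht2 : t < v j + 1 := Finset.mem_range.mp ht
          omega
        · rfl
    · rw [if_neg hmain]
      push_neg at hmain
      obtain ⟨i₀, hi₀, hα⟩ := hmain
      have hi₀j : i₀ ≠ j := fun h => hi₀ (h ▸ Finset.mem_insert_self j S)
      have hi₀S : i₀ ∉ S := fun h => hi₀ (Finset.mem_insert_of_mem h)
      refine Finset.sum_eq_zero fun t ht => ?_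
      split_ifs with hle
      · rw [ih, if_neg, zero_mul]
        intro hcond
        have h0 := hcond i₀ hi₀S
        rw [Finsupp.tsub_apply, Finsupp.single_apply,
          if_neg (fun hh => hi₀j hh.symm)] at h0
        exact hα (by simpa using h0)
      · rfl

lemma eval_mvHasseDeriv_eq_coeff (P : Fin n → R) (f : MvPolynomial (Fin n) R)
    (α : Fin n →₀ ℕ) :
    MvPolynomial.eval P (mvHasseDeriv α f) =
      MvPolynomial.coeff α (MvPolynomial.bind₁ (fun i => X i + C (P i)) f) := by
  classical
  conv_lhs => rw [← MvPolynomial.support_sum_monomial_coeff f]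
  conv_rhs => rw [← MvPolynomial.support_sum_monomial_coeff f]
  rw [mvHasseDeriv_finsetSum, map_sum, map_sum, MvPolynomial.coeff_sum]
  refine Finset.sum_congr rfl fun v _ => ?_
  rw [mvHasseDeriv_monomial, MvPolynomial.eval_monomial, MvPolynomial.bind₁_monomial,
    MvPolynomial.coeff_C_mul]
  have hprod : ∏ i ∈ v.support, (X i + C (P i)) ^ v i
      = ∏ i : Fin n, (X i + C (P i)) ^ v i :=
    Finset.prod_subset (Finset.subset_univ _) (fun i _ hi => by
      rw [Finsupp.notMem_support_iff.mp hi, pow_zero])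
  rw [hprod, coeff_prod_X_add_C, if_pos (fun i hi => absurd (Finset.mem_univ i) hi)]
  rw [Finsupp.prod_fintype _ _ (fun i => pow_zero _), Finset.prod_mul_distrib]
  simp only [Finsupp.tsub_apply]
  push_cast
  ring
end Stmt14Aux

open Polynomial in
lemma exists_interp {K : Type*} [Field K] {n : ℕ} {ι : Type*} [Fintype ι] [DecidableEq ι]
    (D : MvPolynomial (Fin n) K →ₗ[K] (ι → K))
    (Rm : MvPolynomial (Fin n) K →ₗ[K] Polynomial K)
    (hker : ∀ f, D f = 0 → Rm f = 0) :
    ∃ c : ι → Polynomial K, ∀ f, Rm f = ∑ s : ι, (D f s) • c s := by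
  have hker' : LinearMap.ker D ≤ LinearMap.ker Rm := fun f hf =>
    LinearMap.mem_ker.mpr (hker f (LinearMap.mem_ker.mp hf))
  let Φ₀ : ↥(LinearMap.range D) →ₗ[K] Polynomial K :=
    (Submodule.liftQ (LinearMap.ker D) Rm hker') ∘ₗ
      (D.quotKerEquivRange.symm.toLinearMap)
  obtain ⟨g, hg⟩ := LinearMap.exists_leftInverse_of_injective
    (LinearMap.range D).subtype (Submodule.ker_subtype _)
  let Φ : (ι → K) →ₗ[K] Polynomial K := Φ₀ ∘ₗ g
  refine ⟨fun s => Φ (Pi.single s 1), fun f => ?_⟩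
  have h2 : Φ (D f) = Rm f := by
    have h1 : g (D f) = ⟨D f, LinearMap.mem_range_self D f⟩ := by
      have := congrArg (fun (h : ↥(LinearMap.range D) →ₗ[K] ↥(LinearMap.range D)) =>
        h ⟨D f, LinearMap.mem_range_self D f⟩) hg
      simpa using this
    have h3 : D.quotKerEquivRange.symm ⟨D f, LinearMap.mem_range_self D f⟩ =
        Submodule.Quotient.mk f := by
      rw [LinearEquiv.symm_apply_eq]
      exact Subtype.ext (D.quotKerEquivRange_apply_mk f).symm.symm
    show Φ₀ (g (D f)) = Rm f
    rw [h1]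
    show Submodule.liftQ (LinearMap.ker D) Rm hker'
        (D.quotKerEquivRange.symm ⟨D f, LinearMap.mem_range_self D f⟩) = Rm f
    rw [h3, Submodule.liftQ_apply]
  calc Rm f = Φ (D f) := h2.symm
    _ = Φ (∑ s : ι, (D f s) • (Pi.single s (1:K) : ι → K)) := by
        have hrepr : (D f) = ∑ s : ι, (D f s) • (Pi.single s (1:K) : ι → K) := by
          conv_lhs => rw [← Finset.univ_sum_single (D f)]
          refine Finset.sum_congr rfl fun s _ => ?_
          rw [← Pi.single_smul, smul_eq_mul, mul_one]
        rw [← hrepr]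
    _ = ∑ s : ι, (D f s) • Φ (Pi.single s 1) := by
        rw [map_sum]
        exact Finset.sum_congr rfl fun s _ => map_smul Φ _ _

open Polynomial in
lemma key_divisibility {K : Type*} [Field K] {n : ℕ}
    {ι : Type*} [Fintype ι] (r : ι → K) (m : ι → ℕ)
    (hr : Function.Injective r)
    (W : Fin n → Polynomial K)
    (P : ι → Fin n → K)
    (hW : ∀ l, 0 < m l → ∀ i, Polynomial.eval (r l) (W i) = P l i)
    (f : MvPolynomial (Fin n) K)
    (hf : ∀ l (α : Fin n →₀ ℕ), (α.sum fun _ e => e) < m l →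
      MvPolynomial.eval (P l) (mvHasseDeriv α f) = 0) :
    (∏ l : ι, (X - C (r l)) ^ m l) ∣ MvPolynomial.aeval W f := by
  classical
  refine Finset.prod_dvd_of_coprime ?_ (fun l _ => ?_)
  · intro l _ l' _ hll'
    exact (Polynomial.isCoprime_X_sub_C_of_isUnit_sub
      ((sub_ne_zero.mpr (fun h => hll' (hr h))).isUnit)).pow
  · rcases Nat.eq_zero_or_pos (m l) with h0 | hpos
    · rw [h0, pow_zero]; exact one_dvd _
    -- shift f by P l
    set Pl := P l
    set g := MvPolynomial.bind₁ (fun i => MvPolynomial.X i + MvPolynomial.C (Pl i)) f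
      with hg
    have hfg : f = MvPolynomial.bind₁
        (fun i => MvPolynomial.X i - MvPolynomial.C (Pl i)) g := by
      have hc : (fun i => (MvPolynomial.bind₁
            (fun i => MvPolynomial.X i - MvPolynomial.C (Pl i)))
            (MvPolynomial.X i + MvPolynomial.C (Pl i)))
          = (MvPolynomial.X : Fin n → MvPolynomial (Fin n) K) := by
        funext i; simp
      rw [hg, MvPolynomial.bind₁_bind₁, hc, MvPolynomial.bind₁_X_left, AlgHom.id_apply]
    have hcoeff : ∀ α : Fin n →₀ ℕ, (α.sum fun _ e => e) < m l →
        MvPolynomial.coeff α g = 0 := by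
      intro α hα
      rw [hg, ← Stmt14Aux.eval_mvHasseDeriv_eq_coeff]
      exact hf l α hα
    have haeval : MvPolynomial.aeval W f =
        MvPolynomial.aeval (fun i => W i - C (Pl i)) g := by
      have hc : (fun i => (MvPolynomial.aeval W)
            (MvPolynomial.X i - MvPolynomial.C (Pl i)))
          = fun i => W i - C (Pl i) := by
        funext i; simp
      conv_lhs => rw [hfg]
      rw [MvPolynomial.aeval_bind₁, hc]
    rw [haeval]
    conv_rhs => rw [← MvPolynomial.support_sum_monomial_coeff g]
    rw [map_sum]
    refine Finset.dvd_sum fun v hv => ?_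
    rw [MvPolynomial.aeval_monomial]
    have hwt : m l ≤ v.sum fun _ e => e := by
      by_contra hlt
      exact (MvPolynomial.mem_support_iff.mp hv) (hcoeff v (by omega))
    refine Dvd.dvd.mul_left ?_ _
    have hdvd1 : ∀ i, (X - C (r l)) ^ v i ∣ (W i - C (Pl i)) ^ v i := by
      intro i
      apply pow_dvd_pow_of_dvd
      rw [Polynomial.dvd_iff_isRoot]
      simp [Polynomial.IsRoot, hW l hpos i]
      exact sub_self _
    calc (X - C (r l)) ^ m l ∣ (X - C (r l)) ^ (v.sum fun _ e => e) :=
          pow_dvd_pow _ hwt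
      _ = ∏ i ∈ v.support, (X - C (r l)) ^ v i := by
          rw [Finset.prod_pow_eq_pow_sum]; rfl
      _ ∣ ∏ i ∈ v.support, (W i - C (Pl i)) ^ v i :=
          Finset.prod_dvd_prod_of_dvd _ _ (fun i _ => hdvd1 i)

def inclAK (A : Subalgebra ℤ ℂ) (K : IntermediateField ℚ ℂ)
    (h : ∀ x : ℂ, x ∈ A → x ∈ K) : ↥A →+* ↥K where
  toFun := fun x => ⟨(x : ℂ), h _ x.2⟩
  map_one' := rfl
  map_mul' := fun _ _ => rfl
  map_zero' := rfl
  map_add' := fun _ _ => rfl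

noncomputable def Dmap (Kk : Type*) [CommRing Kk] (n : ℕ) (ι : Type*)
    (PK : ι → Fin n → Kk) (αf : ι → (Fin n →₀ ℕ)) :
    MvPolynomial (Fin n) Kk →ₗ[Kk] (ι → Kk) where
  toFun := fun f s => MvPolynomial.eval (PK s) (mvHasseDeriv (αf s) f)
  map_add' := fun f g => by
    funext s
    show MvPolynomial.eval (PK s) (mvHasseDeriv (αf s) (f + g)) = _
    rw [Stmt14Aux.mvHasseDeriv_add, map_add]
    rfl
  map_smul' := fun r f => by
    funext s
    show MvPolynomial.eval (PK s) (mvHasseDeriv (αf s) (r • f)) = _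
    rw [Stmt14Aux.mvHasseDeriv_smul, MvPolynomial.smul_eq_C_mul, map_mul,
      MvPolynomial.eval_C]
    rfl

@[simp] lemma Dmap_apply (Kk : Type*) [CommRing Kk] (n : ℕ) (ι : Type*)
    (PK : ι → Fin n → Kk) (αf : ι → (Fin n →₀ ℕ)) (f : MvPolynomial (Fin n) Kk) (s : ι) :
    Dmap Kk n ι PK αf f s = MvPolynomial.eval (PK s) (mvHasseDeriv (αf s) f) := rfl

/- Decoding from evaluations on rich lines.  The line `L` is parameterized by
`λ ↦ a + λ•u` (injectively, as `u` is primitive), so `π` is given as a function on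
`ℤ/p^kℤ`.  The coefficients `c λ α ∈ ℚ(ζ)[z]` are polynomials over `ℂ` whose
coefficients lie in `ℚ(ζ) = Algebra.adjoin ℚ {ζ}`.  For each `f ∈ ℤ[x₁,…,x_n]`, the sum
`E = ∑_λ ∑_{wt(α)<π(λ)} c_{λ,α}·f^{(α)}(ζ^{a+λu})` lies in `ℤ[ζ][z]/⟨(z−1)^ℓ⟩`, i.e.
agrees mod `(z−1)^ℓ` with a polynomial `E'` over `ℤ[ζ] = Algebra.adjoin ℤ {ζ}`, and
applying `ψ_{p^k}` (coefficientwise `θ : ℤ[ζ] → F_p` with `θ(ζ) = 1`) yields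
`f(z^{u'}) ∈ F_p[z]/⟨(z−1)^ℓ⟩`, where `z` is the unit `zu` of `F_p[z]/⟨(z−1)^ℓ⟩`
so that the integer powers `z^{u'_i}` make sense. -/
set_option maxHeartbeats 4000000 in
set_option synthInstance.maxHeartbeats 2000000 in
open Polynomial in
theorem stmt14 (p k ℓ n : ℕ) [Fact p.Prime] [NeZero (p ^ k)]
    (hk : 1 ≤ k) (hl : 1 ≤ ℓ) (hn : 1 ≤ n)
    (ζ : ℂ) (hζ : IsPrimitiveRoot ζ (p ^ k))
    (a u : Fin n → ZMod (p ^ k)) (hu : IsPrimitiveVec u)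
    (u' : Fin n → ℤ) (hu' : ∀ i, ((u' i : ℤ) : ZMod (p ^ k)) = u i)
    (π : ZMod (p ^ k) → ℕ) (hπ : ℓ ≤ ∑ lam : ZMod (p ^ k), π lam) :
    ∃ c : ZMod (p ^ k) → (Fin n →₀ ℕ) → Polynomial ℂ,
      (∀ lam α j, (c lam α).coeff j ∈ (Algebra.adjoin ℚ {ζ} : Subalgebra ℚ ℂ)) ∧
      ∀ f : MvPolynomial (Fin n) ℤ,
        ∃ E' : Polynomial ↥(Algebra.adjoin ℤ {ζ} : Subalgebra ℤ ℂ),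
          ((Polynomial.X - 1) ^ ℓ ∣
            ((∑ lam : ZMod (p ^ k), ∑ α ∈ degLT n (π lam),
                c lam α * Polynomial.C (MvPolynomial.aeval
                  (fun i => ζ ^ ((a i + lam * u i).val)) (mvHasseDeriv α f)))
              - E'.map (Algebra.adjoin ℤ {ζ}).subtype)) ∧
          ∀ θ : ↥(Algebra.adjoin ℤ {ζ} : Subalgebra ℤ ℂ) →+* ZMod p,
            θ ⟨ζ, Algebra.subset_adjoin (Set.mem_singleton ζ)⟩ = 1 →
            ∀ zu : (Tp p ℓ)ˣ,
              (zu : Tp p ℓ) = Ideal.Quotient.mk _ (Polynomial.X : Polynomial (ZMod p)) →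
              Ideal.Quotient.mk _ (E'.map θ) =
                MvPolynomial.aeval (fun i => ((zu ^ (u' i) : (Tp p ℓ)ˣ) : Tp p ℓ)) f := by
  classical
  have Npos : 0 < (p ^ k) := Nat.pos_of_ne_zero (NeZero.ne _)
  set A : Subalgebra ℤ ℂ := Algebra.adjoin ℤ {ζ} with hA
  have hζA : ζ ∈ A := Algebra.subset_adjoin (Set.mem_singleton ζ)
  set ζA : A := ⟨ζ, hζA⟩ with hζAdef
  have hζApow : ζA ^ (p ^ k) = 1 := Subtype.ext (by simpa using hζ.pow_eq_one)
  have hζAunit : IsUnit ζA := IsUnit.of_mul_eq_one (ζA ^ ((p ^ k) - 1))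
    (by rw [← pow_succ', Nat.sub_add_cancel Npos, hζApow])
  set MA : Polynomial ↥A := ∏ lam : ZMod (p ^ k), (X - C (ζA ^ lam.val)) ^ π lam with hMA
  have hMAmonic : MA.Monic := Polynomial.monic_prod_of_monic _ _
    (fun lam _ => (Polynomial.monic_X_sub_C _).pow _)
  have hc0 : IsUnit (MA.coeff 0) := by
    rw [Polynomial.coeff_zero_eq_eval_zero, hMA, Polynomial.eval_prod]
    refine Finset.prod_induction _ IsUnit (fun x y hx hy => hx.mul hy) isUnit_one
      (fun lam _ => ?_)
    rw [Polynomial.eval_pow, Polynomial.eval_sub, Polynomial.eval_X, Polynomial.eval_C,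
      zero_sub]
    exact ((hζAunit.pow _).neg).pow _
  set i0 : ↥A := ↑(hc0.unit⁻¹) with hi0
  have hi0c0 : i0 * MA.coeff 0 = 1 := by
    rw [hi0]
    nth_rewrite 2 [← hc0.unit_spec]
    exact Units.inv_mul hc0.unit
  set vA : Polynomial ↥A := -(C i0) * MA.divX with hvA
  have hXvA : X * vA = 1 - C i0 * MA := by
    have h := Polynomial.X_mul_divX_add MA
    calc X * vA
        = -(C i0) * (X * MA.divX + C (MA.coeff 0)) + C i0 * C (MA.coeff 0) := by
          rw [hvA]; ring
      _ = -(C i0) * MA + C (i0 * MA.coeff 0) := by rw [h, ← C_mul]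
      _ = 1 - C i0 * MA := by rw [hi0c0, C_1]; ring
  set e : Fin n → ℕ := fun i => (u' i).toNat with he
  set d : Fin n → ℕ := fun i => (-(u' i)).toNat with hd
  have hed : ∀ i, (e i : ℤ) - d i = u' i := fun i => Int.toNat_sub_toNat_neg (u' i)
  set WA : Fin n → Polynomial ↥A := fun i => C (ζA ^ (a i).val) * X ^ e i * vA ^ d i
    with hWA
  -- the field K = ℚ(ζ)
  have hζint : IsIntegral ℚ ζ := (hζ.isIntegral Npos).tower_top
  obtain ⟨K, hKsub⟩ : ∃ K : IntermediateField ℚ ℂ,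
      K.toSubalgebra = Algebra.adjoin ℚ {ζ} :=
    ⟨IntermediateField.adjoin ℚ {ζ},
      IntermediateField.adjoin_simple_toSubalgebra_of_isAlgebraic hζint.isAlgebraic⟩
  have hmemK : ∀ x : ℂ, x ∈ A → x ∈ K := by
    intro x hx
    have h1 : A ≤ Subalgebra.restrictScalars ℤ (Algebra.adjoin ℚ {ζ}) := by
      rw [hA]
      exact Algebra.adjoin_le (fun y hy => Algebra.subset_adjoin hy)
    have h2 : x ∈ Algebra.adjoin ℚ {ζ} := h1 hx
    rw [← hKsub] at h2
    exact h2
  set ιAK : ↥A →+* ↥K := inclAK A K hmemK with hιAK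
  set ζK : ↥K := ιAK ζA with hζKdef
  have hζKprim : IsPrimitiveRoot ζK (p ^ k) := by
    apply IsPrimitiveRoot.of_map_of_injective (f := algebraMap ↥K ℂ)
    · exact hζ
    · exact (algebraMap ↥K ℂ).injective
  have hζK0 : ζK ≠ 0 := hζKprim.ne_zero Npos.ne'
  have hζKpow : ζK ^ (p ^ k) = 1 := hζKprim.pow_eq_one
  have hzpow_congr : ∀ s t : ℤ, ((s : ZMod (p ^ k)) = (t : ZMod (p ^ k))) → ζK ^ s = ζK ^ t := by
    intro s t hst
    obtain ⟨cc, hcc⟩ := ((ZMod.intCast_eq_intCast_iff s t (p ^ k)).mp hst).dvd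
    have ht : t = s + ((p ^ k : ℕ) : ℤ) * cc := by linear_combination hcc
    rw [ht, zpow_add₀ hζK0, zpow_mul, zpow_natCast ζK (p ^ k), hζKpow, one_zpow,
      mul_one]
  have hvalZ : ∀ x : ZMod (p ^ k), (((x.val : ℕ) : ℤ) : ZMod (p ^ k)) = x := fun x => by
    rw [Int.cast_natCast, ZMod.natCast_val, ZMod.cast_id]
  set MK : Polynomial ↥K := MA.map ιAK with hMK
  have hMKprod : MK = ∏ lam : ZMod (p ^ k), (X - C (ζK ^ lam.val)) ^ π lam := by
    rw [hMK, hMA, Polynomial.map_prod]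
    refine Finset.prod_congr rfl fun lam _ => ?_
    rw [Polynomial.map_pow, Polynomial.map_sub, Polynomial.map_X, Polynomial.map_C,
      map_pow ιAK, hζKdef]
  set vK := vA.map ιAK with hvKdef
  set WK : Fin n → Polynomial ↥K := fun i => (WA i).map ιAK with hWK
  have hXvK : X * vK = 1 - C (ιAK i0) * MK := by
    have h1 := congrArg (Polynomial.map ιAK) hXvA
    simpa only [Polynomial.map_mul, Polynomial.map_sub, Polynomial.map_one,
      Polynomial.map_X, Polynomial.map_C] using h1
  set PK : ZMod (p ^ k) → Fin n → ↥K := fun lam i => ζK ^ ((a i + lam * u i).val) with hPK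
  have hWeval : ∀ lam : ZMod (p ^ k), 0 < π lam → ∀ i,
      Polynomial.eval (ζK ^ lam.val) (WK i) = PK lam i := by
    intro lam hpos i
    have hMKroot : Polynomial.eval (ζK ^ lam.val) MK = 0 := by
      rw [hMKprod, Polynomial.eval_prod]
      refine Finset.prod_eq_zero (Finset.mem_univ lam) ?_
      rw [Polynomial.eval_pow, Polynomial.eval_sub, Polynomial.eval_X, Polynomial.eval_C,
        sub_self, zero_pow hpos.ne']
    have hvKeval : Polynomial.eval (ζK ^ lam.val) vK = (ζK ^ lam.val)⁻¹ := by
      apply eq_inv_of_mul_eq_one_right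
      have h1 := congrArg (Polynomial.eval (ζK ^ lam.val)) hXvK
      rw [Polynomial.eval_mul, Polynomial.eval_X, Polynomial.eval_sub,
        Polynomial.eval_one, Polynomial.eval_mul, Polynomial.eval_C, hMKroot,
        mul_zero, sub_zero] at h1
      exact h1
    rw [hWK]
    simp only [hWA, Polynomial.map_mul, Polynomial.map_pow, Polynomial.map_C,
      Polynomial.map_X]
    rw [Polynomial.eval_mul, Polynomial.eval_mul, Polynomial.eval_pow,
      Polynomial.eval_pow, Polynomial.eval_C, Polynomial.eval_X, hvKeval]
    rw [map_pow ιAK, ← hζKdef]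
    rw [← pow_mul, inv_pow, ← pow_mul]
    rw [← zpow_natCast ζK ((a i).val), ← zpow_natCast ζK (lam.val * e i),
      ← zpow_natCast ζK (lam.val * d i), ← zpow_neg, ← zpow_add₀ hζK0,
      ← zpow_add₀ hζK0]
    simp only [hPK]
    rw [← zpow_natCast ζK ((a i + lam * u i).val)]
    apply hzpow_congr
    have hexp : (((a i).val : ℤ) + ((lam.val * e i : ℕ) : ℤ) + -((lam.val * d i : ℕ) : ℤ))
        = ((a i).val : ℤ) + (lam.val : ℤ) * u' i := by
      push_cast
      rw [← hed i]
      ring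
    rw [hexp]
    rw [Int.cast_add, Int.cast_mul, hvalZ, hvalZ, hu' i, hvalZ]
  -- linear algebra
  set ι : Type := (lam : ZMod (p ^ k)) × {α : Fin n →₀ ℕ // α ∈ degLT n (π lam)} with hι
  have hdegLT : ∀ (dd : ℕ) (α : Fin n →₀ ℕ),
      α ∈ degLT n dd ↔ (α.sum fun _ e => e) < dd := by
    intro dd α
    rw [degLT, Finset.mem_filter, Finset.mem_Iic]
    constructor
    · exact fun h => h.2
    · intro h
      refine ⟨?_, h⟩
      rw [Finsupp.le_def]
      intro i
      have h1 : α i ≤ α.sum fun _ e => e := by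
        rcases Nat.eq_zero_or_pos (α i) with h0 | hpos
        · omega
        · exact Finset.single_le_sum (f := fun j => α j) (fun j _ => Nat.zero_le _)
            (Finsupp.mem_support_iff.mpr hpos.ne')
      have h2 : (Finsupp.equivFunOnFinite.symm fun _ : Fin n => dd) i = dd := rfl
      omega
  set D : MvPolynomial (Fin n) ↥K →ₗ[↥K] (ι → ↥K) :=
    Dmap ↥K n ι (fun s => PK s.1) (fun s => s.2.1) with hD
  set Rm : MvPolynomial (Fin n) ↥K →ₗ[↥K] Polynomial ↥K :=
    (Polynomial.modByMonicHom MK) ∘ₗ (MvPolynomial.aeval WK).toLinearMap with hRm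
  have hMKmonic : MK.Monic := hMAmonic.map ιAK
  have hker : ∀ f, D f = 0 → Rm f = 0 := by
    intro f hf
    show (MvPolynomial.aeval WK f) %ₘ MK = 0
    rw [Polynomial.modByMonic_eq_zero_iff_dvd hMKmonic, hMKprod]
    apply key_divisibility (fun lam : ZMod (p ^ k) => ζK ^ lam.val) π ?_ WK PK hWeval f ?_
    · intro l l' h
      exact ZMod.val_injective (p ^ k) (hζKprim.pow_inj (ZMod.val_lt l) (ZMod.val_lt l') h)
    · intro l α hα
      exact congrFun hf ⟨l, ⟨α, (hdegLT _ α).mpr hα⟩⟩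
  obtain ⟨cK, hcK⟩ := exists_interp D Rm hker
  refine ⟨fun lam α => if h : α ∈ degLT n (π lam)
      then (cK ⟨lam, ⟨α, h⟩⟩).map (algebraMap ↥K ℂ) else 0, ?_, ?_⟩
  · intro lam α j
    simp only []
    by_cases h : α ∈ degLT n (π lam)
    · rw [dif_pos h, Polynomial.coeff_map]
      have hx : ((((cK ⟨lam, ⟨α, h⟩⟩).coeff j : ↥K)) : ℂ) ∈ K.toSubalgebra :=
        ((cK ⟨lam, ⟨α, h⟩⟩).coeff j).2
      rw [hKsub] at hx
      exact hx
    · rw [dif_neg h, Polynomial.coeff_zero]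
      exact zero_mem _
  · intro f
    set fK : MvPolynomial (Fin n) ↥K := MvPolynomial.map (algebraMap ℤ ↥K) f with hfK
    set E' : Polynomial ↥A := (MvPolynomial.aeval WA f) %ₘ MA with hE'
    have haevalK : MvPolynomial.aeval WK fK = (MvPolynomial.aeval WA f).map ιAK := by
      rw [hfK, MvPolynomial.aeval_map_algebraMap]
      have hhom : (MvPolynomial.aeval WK : MvPolynomial (Fin n) ℤ →ₐ[ℤ] Polynomial ↥K)
          = ((Polynomial.mapRingHom ιAK).toIntAlgHom.comp
             (MvPolynomial.aeval WA : MvPolynomial (Fin n) ℤ →ₐ[ℤ] Polynomial ↥A)) := by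
        apply MvPolynomial.algHom_ext
        intro i
        simp [hWK]
        show Polynomial.map ιAK (WA i) = Polynomial.mapRingHom ιAK (MvPolynomial.aeval WA (MvPolynomial.X i))
        rw [MvPolynomial.aeval_X]; rfl
      exact DFunLike.congr_fun hhom f
    have hRmE : Rm fK = E'.map ιAK := by
      show (MvPolynomial.aeval WK fK) %ₘ MK = E'.map ιAK
      rw [haevalK, hE', Polynomial.map_modByMonic ιAK hMAmonic]
    have hDval : ∀ (s : ι), algebraMap ↥K ℂ (D fK s) =
        MvPolynomial.aeval (fun i => ζ ^ ((a i + s.1 * u i).val)) (mvHasseDeriv s.2.1 f) := by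
      intro s
      show algebraMap ↥K ℂ (MvPolynomial.eval (PK s.1) (mvHasseDeriv s.2.1 fK)) = _
      rw [hfK, Stmt14Aux.mvHasseDeriv_map, MvPolynomial.eval_map,
        MvPolynomial.eval₂_comp_left]
      rw [MvPolynomial.aeval_def]
      have h1 : (algebraMap ↥K ℂ).comp (algebraMap ℤ ↥K) = algebraMap ℤ ℂ :=
        Subsingleton.elim _ _
      have h2 : (⇑(algebraMap ↥K ℂ) ∘ fun i => PK s.1 i)
          = fun i => ζ ^ ((a i + s.1 * u i).val) := by
        funext i
        show ((ζK ^ ((a i + s.1 * u i).val) : ↥K) : ℂ) = _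
        push_cast
        rfl
      rw [h1, h2]
    have hstep1 : (∑ lam : ZMod (p ^ k), ∑ α ∈ degLT n (π lam),
          (if h : α ∈ degLT n (π lam)
            then (cK ⟨lam, ⟨α, h⟩⟩).map (algebraMap ↥K ℂ) else 0) *
            Polynomial.C (MvPolynomial.aeval
              (fun i => ζ ^ ((a i + lam * u i).val)) (mvHasseDeriv α f)))
        = ∑ s : ((lam : ZMod (p ^ k)) × {α : Fin n →₀ ℕ // α ∈ degLT n (π lam)}),
            ((D fK s • cK s).map (algebraMap ↥K ℂ)) := by
      rw [← Finset.univ_sigma_univ, Finset.sum_sigma]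
      refine Finset.sum_congr rfl fun lam _ => ?_
      rw [← Finset.sum_coe_sort (degLT n (π lam))]
      refine Finset.sum_congr rfl fun b _ => ?_
      rw [dif_pos b.2, Polynomial.smul_eq_C_mul, Polynomial.map_mul,
        Polynomial.map_C, hDval ⟨lam, b⟩, mul_comm, Subtype.coe_eta]
    have hstep3 : (Rm fK).map (algebraMap ↥K ℂ) = E'.map A.subtype := by
      rw [hRmE, Polynomial.map_map]
      congr 1
    refine ⟨E', ?_, ?_⟩
    · -- divisibility: the difference is zero
      have hEq : (∑ lam : ZMod (p ^ k), ∑ α ∈ degLT n (π lam),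
          (if h : α ∈ degLT n (π lam)
            then (cK ⟨lam, ⟨α, h⟩⟩).map (algebraMap ↥K ℂ) else 0) *
            Polynomial.C (MvPolynomial.aeval
              (fun i => ζ ^ ((a i + lam * u i).val)) (mvHasseDeriv α f)))
          = E'.map A.subtype := by
        rw [hstep1, ← hstep3, hcK fK, Polynomial.map_sum]
      simp only []
      rw [hEq, sub_self]
      exact dvd_zero _
    · -- the ψ computation
      intro θ hθ zu hzu
      have hπ' : ℓ ≤ ∑ lam : ZMod (p ^ k), π lam := hπ
      have hθζA : θ ζA = 1 := hθ
      have hθζ : ∀ mm : ℕ, θ (ζA ^ mm) = 1 := fun mm => by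
        rw [map_pow, hθζA, one_pow]
      have hmonic1 : ((X : Polynomial (ZMod p)) - 1).Monic := by
        simpa using Polynomial.monic_X_sub_C (1 : ZMod p)
      have hMθ : MA.map θ = ((X : Polynomial (ZMod p)) - 1) ^ (∑ lam : ZMod (p ^ k), π lam) := by
        rw [hMA, Polynomial.map_prod, ← Finset.prod_pow_eq_pow_sum]
        refine Finset.prod_congr rfl fun lam _ => ?_
        rw [Polynomial.map_pow, Polynomial.map_sub, Polynomial.map_X,
          Polynomial.map_C, hθζ, Polynomial.C_1]
      have hzero : ∀ q : Polynomial (ZMod p),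
          Ideal.Quotient.mk (Ideal.span {((X : Polynomial (ZMod p)) - 1) ^ ℓ})
            (((X : Polynomial (ZMod p)) - 1) ^ (∑ lam : ZMod (p ^ k), π lam) * q) = 0 := by
        intro q
        rw [Ideal.Quotient.eq_zero_iff_mem]
        exact Ideal.mul_mem_right _ _
          (Ideal.mem_span_singleton.mpr (pow_dvd_pow _ hπ'))
      have hmkE : Ideal.Quotient.mk (Ideal.span {((X : Polynomial (ZMod p)) - 1) ^ ℓ})
          (E'.map θ) = Ideal.Quotient.mk _ ((MvPolynomial.aeval WA f).map θ) := by
        rw [hE', Polynomial.map_modByMonic θ hMAmonic, hMθ,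
          Polynomial.modByMonic_eq_sub_mul_div _ _, map_sub, hzero,
          sub_zero]
      have hvAθ : Ideal.Quotient.mk (Ideal.span {((X : Polynomial (ZMod p)) - 1) ^ ℓ})
          (vA.map θ) = ((zu⁻¹ : (Tp p ℓ)ˣ) : Tp p ℓ) := by
        have h1 := congrArg (Polynomial.map θ) hXvA
        simp only [Polynomial.map_mul, Polynomial.map_sub, Polynomial.map_one,
          Polynomial.map_X, Polynomial.map_C] at h1
        rw [hMθ] at h1
        have h2 := congrArg (Ideal.Quotient.mk
          (Ideal.span {((X : Polynomial (ZMod p)) - 1) ^ ℓ})) h1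
        rw [map_mul, map_sub, map_one, mul_comm (Polynomial.C (θ i0))] at h2
        rw [hzero, sub_zero, ← hzu] at h2
        calc Ideal.Quotient.mk (Ideal.span {((X : Polynomial (ZMod p)) - 1) ^ ℓ})
              (vA.map θ)
            = ((zu⁻¹ : (Tp p ℓ)ˣ) : Tp p ℓ) * ((zu : Tp p ℓ) *
                Ideal.Quotient.mk _ (vA.map θ)) := by
              rw [← mul_assoc, ← Units.val_mul, inv_mul_cancel, Units.val_one, one_mul]
          _ = ((zu⁻¹ : (Tp p ℓ)ˣ) : Tp p ℓ) * 1 := by rw [h2]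
          _ = _ := mul_one _
      have hWθ : ∀ i, Ideal.Quotient.mk (Ideal.span {((X : Polynomial (ZMod p)) - 1) ^ ℓ})
          ((WA i).map θ) = ((zu ^ (u' i) : (Tp p ℓ)ˣ) : Tp p ℓ) := by
        intro i
        have hWAi : WA i = C (ζA ^ (a i).val) * X ^ e i * vA ^ d i := by rw [hWA]
        rw [hWAi]
        simp only [Polynomial.map_mul, Polynomial.map_pow, Polynomial.map_C,
          Polynomial.map_X]
        rw [hθζ, Polynomial.C_1, one_mul, map_mul, map_pow, map_pow, hvAθ, ← hzu]
        rw [← Units.val_pow_eq_pow_val, ← Units.val_pow_eq_pow_val, ← Units.val_mul]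
        congr 1
        rw [← hed i, zpow_sub, zpow_natCast, zpow_natCast, inv_pow]
      have hmkAeval : Ideal.Quotient.mk (Ideal.span {((X : Polynomial (ZMod p)) - 1) ^ ℓ})
          ((MvPolynomial.aeval WA f).map θ) =
          MvPolynomial.aeval (fun i => Ideal.Quotient.mk
            (Ideal.span {((X : Polynomial (ZMod p)) - 1) ^ ℓ}) ((WA i).map θ)) f := by
        have hhom : (((Ideal.Quotient.mk (Ideal.span
              {((X : Polynomial (ZMod p)) - 1) ^ ℓ})).comp
              (Polynomial.mapRingHom θ)).toIntAlgHom.comp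
              (MvPolynomial.aeval WA : MvPolynomial (Fin n) ℤ →ₐ[ℤ] Polynomial ↥A))
            = (MvPolynomial.aeval (fun i => Ideal.Quotient.mk
                (Ideal.span {((X : Polynomial (ZMod p)) - 1) ^ ℓ}) ((WA i).map θ))) := by
          apply MvPolynomial.algHom_ext
          intro i
          simp
          show Ideal.Quotient.mk (Ideal.span {((X : Polynomial (ZMod p)) - 1) ^ ℓ})
            (Polynomial.mapRingHom θ (MvPolynomial.aeval WA (MvPolynomial.X i))) = _
          rw [MvPolynomial.aeval_X]; rfl
        exact DFunLike.congr_fun hhom f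
      have hpoints : (fun i => Ideal.Quotient.mk
            (Ideal.span {((X : Polynomial (ZMod p)) - 1) ^ ℓ}) ((WA i).map θ))
          = fun i => ((zu ^ (u' i) : (Tp p ℓ)ˣ) : Tp p ℓ) := funext hWθ
      rw [hmkE, hmkAeval, hpoints]
end

section
/- Let n, w ≥ 1 be integers and let b₁ ≥ b₂ ≥ ··· ≥ b_w ≥ 0 be a nonincreasing sequence of nonnegative integers. Then ∑_{i=1}^{w} b_iⁿ · (iⁿ − (i−1)ⁿ) ≥ ( (∑_{i=1}^{w} b_i) / (log(w) + 1) )ⁿ, where log denotes the natural logarithm. -/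
theorem stmt15 (n w : ℕ) (hn : 1 ≤ n) (hw : 1 ≤ w) (b : ℕ → ℕ)
    (hmono : ∀ i j : ℕ, 1 ≤ i → i ≤ j → j ≤ w → b j ≤ b i) :
    ∑ i ∈ Finset.Icc 1 w, (b i : ℝ) ^ n * ((i : ℝ) ^ n - ((i : ℝ) - 1) ^ n) ≥
      ((∑ i ∈ Finset.Icc 1 w, (b i : ℝ)) / (Real.log w + 1)) ^ n := by
  set LHS := ∑ i ∈ Finset.Icc 1 w, (b i : ℝ) ^ n * ((i : ℝ) ^ n - ((i : ℝ) - 1) ^ n) with hL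
  -- nonnegativity of terms
  have hterm : ∀ j ∈ Finset.Icc 1 w, 0 ≤ (b j : ℝ) ^ n * ((j : ℝ) ^ n - ((j : ℝ) - 1) ^ n) := by
    intro j hj
    rw [Finset.mem_Icc] at hj
    have h1 : (1 : ℝ) ≤ (j : ℝ) := by exact_mod_cast hj.1
    apply mul_nonneg (by positivity)
    have : (0:ℝ) ≤ (j:ℝ) - 1 := by linarith
    have := pow_le_pow_left₀ this (by linarith : (j:ℝ) - 1 ≤ (j:ℝ)) n
    linarith
  -- telescoping: ∑_{j=1}^i (j^n - (j-1)^n) = i^n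
  have htel : ∀ i : ℕ, ∑ j ∈ Finset.Icc 1 i, (((j:ℝ)) ^ n - ((j:ℝ) - 1) ^ n) = (i:ℝ) ^ n := by
    intro i
    induction i with
    | zero => simp [zero_pow (by omega : n ≠ 0)]
    | succ k ih =>
      rw [Finset.sum_Icc_succ_top (by omega), ih]
      push_cast; ring
  -- key: LHS ≥ (b i * i)^n for each i
  have hkey : ∀ i ∈ Finset.Icc 1 w, ((b i : ℝ) * i) ^ n ≤ LHS := by
    intro i hi
    rw [Finset.mem_Icc] at hi
    have hsub : Finset.Icc 1 i ⊆ Finset.Icc 1 w := Finset.Icc_subset_Icc_right hi.2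
    calc ((b i : ℝ) * i) ^ n = ∑ j ∈ Finset.Icc 1 i, (b i : ℝ) ^ n * (((j:ℝ)) ^ n - ((j:ℝ) - 1) ^ n) := by
          rw [← Finset.mul_sum, htel, mul_pow]
      _ ≤ ∑ j ∈ Finset.Icc 1 i, (b j : ℝ) ^ n * (((j:ℝ)) ^ n - ((j:ℝ) - 1) ^ n) := by
          apply Finset.sum_le_sum
          intro j hj
          rw [Finset.mem_Icc] at hj
          have hbj : (b i : ℝ) ≤ (b j : ℝ) := by
            exact_mod_cast hmono j i hj.1 hj.2 hi.2
          apply mul_le_mul_of_nonneg_right (pow_le_pow_left₀ (by positivity) hbj n)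
          have h1 : (1 : ℝ) ≤ (j : ℝ) := by exact_mod_cast hj.1
          have : (0:ℝ) ≤ (j:ℝ) - 1 := by linarith
          have := pow_le_pow_left₀ this (by linarith : (j:ℝ) - 1 ≤ (j:ℝ)) n
          linarith
      _ ≤ LHS := Finset.sum_le_sum_of_subset_of_nonneg hsub (fun j hj _ => hterm j hj)
  -- pick maximizer
  obtain ⟨i₀, hi₀, hmax⟩ := Finset.exists_max_image (Finset.Icc 1 w)
    (fun i => (b i : ℝ) * i) ⟨1, Finset.mem_Icc.mpr ⟨le_refl 1, hw⟩⟩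
  set M := (b i₀ : ℝ) * i₀ with hM
  have hMnonneg : 0 ≤ M := by
    rw [Finset.mem_Icc] at hi₀; positivity
  -- sum bound: S ≤ M * (1 + log w)
  have hdenom : (0:ℝ) < Real.log w + 1 := by
    have : (0:ℝ) ≤ Real.log w := Real.log_natCast_nonneg w
    linarith
  have hS : ∑ i ∈ Finset.Icc 1 w, (b i : ℝ) ≤ M * (Real.log w + 1) := by
    calc ∑ i ∈ Finset.Icc 1 w, (b i : ℝ) ≤ ∑ i ∈ Finset.Icc 1 w, M * (i : ℝ)⁻¹ := by
          apply Finset.sum_le_sum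
          intro i hi
          have hmi := hmax i hi
          rw [Finset.mem_Icc] at hi
          have hip : (0:ℝ) < (i:ℝ) := by exact_mod_cast Nat.lt_of_lt_of_le Nat.zero_lt_one hi.1
          calc (b i : ℝ) = ((b i : ℝ) * i) * (i:ℝ)⁻¹ := by field_simp
            _ ≤ M * (i:ℝ)⁻¹ := by
                apply mul_le_mul_of_nonneg_right hmi (by positivity)
      _ = M * ∑ i ∈ Finset.Icc 1 w, (i:ℝ)⁻¹ := by rw [Finset.mul_sum]
      _ ≤ M * (1 + Real.log w) := by
          apply mul_le_mul_of_nonneg_left _ hMnonneg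
          have h1 : (harmonic w : ℝ) ≤ 1 + Real.log w := harmonic_le_one_add_log w
          have h2 : (harmonic w : ℝ) = ∑ i ∈ Finset.Icc 1 w, (i:ℝ)⁻¹ := by
            rw [harmonic_eq_sum_Icc]; push_cast; rfl
          linarith
      _ = M * (Real.log w + 1) := by ring
  have hq : (∑ i ∈ Finset.Icc 1 w, (b i : ℝ)) / (Real.log w + 1) ≤ M := by
    rw [div_le_iff₀ hdenom]
    exact hS
  have hqnn : 0 ≤ (∑ i ∈ Finset.Icc 1 w, (b i : ℝ)) / (Real.log w + 1) := by
    apply div_nonneg _ hdenom.le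
    exact Finset.sum_nonneg (fun i _ => by positivity)
  calc ((∑ i ∈ Finset.Icc 1 w, (b i : ℝ)) / (Real.log w + 1)) ^ n
      ≤ M ^ n := pow_le_pow_left₀ hqnn hq n
    _ ≤ LHS := hkey i₀ hi₀
end

section
/- Let m ≥ 1 be an integer and let V_m be the m × m matrix over ℤ[z] with rows and columns indexed by {0,…,m−1} whose (i,j) entry is z^{i·j}. Then there exist an m × m lower triangular matrix L_m over ℤ[z] with all diagonal entries equal to 1, whose inverse exists and is also lower triangular with entries in ℤ[z] and all diagonal entries equal to 1, and an m × m upper triangular matrix D_m over ℤ[z] whose j-th diagonal entry is D_m(j,j) = ∏_{i=0}^{j-1} (z^j − z^i) for j ∈ {0,…,m−1}, such that V_m = L_m · D_m. -/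
open Polynomial Finset

/-- Gaussian binomial coefficient as a polynomial in `X` over `ℤ`. -/
noncomputable def gb : ℕ → ℕ → Polynomial ℤ
  | _, 0 => 1
  | 0, _ + 1 => 0
  | n + 1, k + 1 => gb n k + X ^ (k + 1) * gb n (k + 1)

noncomputable def wp (k : ℕ) : Polynomial ℤ :=
  ∏ i ∈ Finset.range k, ((X : Polynomial ℤ) ^ k - X ^ i)

lemma gb_zero (n : ℕ) : gb n 0 = 1 := by cases n <;> rfl

lemma gb_eq_zero : ∀ {n k : ℕ}, n < k → gb n k = 0 := by
  intro n
  induction n with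
  | zero => intro k h; cases k with
    | zero => omega
    | succ k => rfl
  | succ n ih =>
    intro k h
    cases k with
    | zero => omega
    | succ k =>
      show gb n k + X ^ (k + 1) * gb n (k + 1) = 0
      rw [ih (by omega), ih (by omega)]; ring

lemma gb_diag (n : ℕ) : gb n n = 1 := by
  induction n with
  | zero => rfl
  | succ n ih =>
    show gb n n + X ^ (n + 1) * gb n (n + 1) = 1
    rw [ih, gb_eq_zero (Nat.lt_succ_self n)]; ring

lemma wp_succ (k : ℕ) :
    wp (k + 1) = ((X : Polynomial ℤ) ^ (k + 1) - 1) * (X ^ k * wp k) := by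
  unfold wp
  rw [Finset.prod_range_succ']
  have h : ∀ i ∈ Finset.range k,
      (X : Polynomial ℤ) ^ (k + 1) - X ^ (i + 1) = X * (X ^ k - X ^ i) := by
    intro i _; ring
  rw [Finset.prod_congr rfl h, Finset.prod_mul_distrib, Finset.prod_const, card_range]
  ring

lemma Mne (k : ℕ) : ((X : Polynomial ℤ) ^ (k + 1) - 1) * X ^ k ≠ 0 := by
  apply mul_ne_zero
  · intro h
    have := congrArg (fun p => Polynomial.eval 0 p) h
    simp at this
  · exact pow_ne_zero _ X_ne_zero

lemma keyA' : ∀ n k : ℕ,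
    ((X : Polynomial ℤ) ^ (k + 1) - 1) * X ^ k * gb n (k + 1) = (X ^ n - X ^ k) * gb n k := by
  intro n
  induction n with
  | zero =>
    intro k
    cases k with
    | zero => simp [gb]
    | succ k => rw [gb_eq_zero (by omega), gb_eq_zero (by omega)]; ring
  | succ n ih =>
    intro k
    cases k with
    | zero =>
      have h0 := ih 0
      show ((X : Polynomial ℤ) ^ 1 - 1) * X ^ 0 * (gb n 0 + X ^ 1 * gb n 1)
        = (X ^ (n + 1) - X ^ 0) * gb (n + 1) 0
      rw [gb_zero, gb_zero]
      rw [gb_zero] at h0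
      linear_combination X * h0
    | succ k =>
      have A0 := ih k
      have A1 := ih (k + 1)
      apply mul_left_cancel₀ (Mne k)
      show ((X : Polynomial ℤ) ^ (k + 1) - 1) * X ^ k *
          (((X : Polynomial ℤ) ^ (k + 2) - 1) * X ^ (k + 1) *
            (gb n (k + 1) + X ^ (k + 2) * gb n (k + 2)))
        = ((X : Polynomial ℤ) ^ (k + 1) - 1) * X ^ k *
          ((X ^ (n + 1) - X ^ (k + 1)) * (gb n k + X ^ (k + 1) * gb n (k + 1)))
      linear_combination (((X : Polynomial ℤ) ^ (k + 1) - 1) * X ^ k * X ^ (k + 2)) * A1 +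
        ((X : Polynomial ℤ) ^ (k + 1) * (X ^ (k + 1) - 1)) * A0

lemma keyA (n k : ℕ) :
    gb n (k + 1) * wp (k + 1) = (X ^ n - X ^ k) * (gb n k * wp k) := by
  rw [wp_succ]
  linear_combination (wp k) * keyA' n k

lemma key (j : ℕ) : ∀ i : ℕ,
    (∑ k ∈ Finset.range (i + 1), gb i k * (gb j k * wp k)) = (X : Polynomial ℤ) ^ (i * j) := by
  intro i
  induction i with
  | zero => simp [gb, wp]
  | succ i ih =>
    have expand : ∀ k : ℕ, gb (i + 1) (k + 1) * (gb j (k + 1) * wp (k + 1))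
        = X ^ j * (gb i k * (gb j k * wp k)) +
          (X ^ (k + 1) * (gb i (k + 1) * (gb j (k + 1) * wp (k + 1))) -
            X ^ k * (gb i k * (gb j k * wp k))) := by
      intro k
      have hA := keyA j k
      show (gb i k + X ^ (k + 1) * gb i (k + 1)) * (gb j (k + 1) * wp (k + 1)) = _
      linear_combination (gb i k) * hA
    rw [Finset.sum_range_succ']
    simp only [expand]
    rw [Finset.sum_add_distrib, ← Finset.mul_sum, ih,
      Finset.sum_range_sub (fun k => (X : Polynomial ℤ) ^ k * (gb i k * (gb j k * wp k)))]
    rw [gb_eq_zero (Nat.lt_succ_self i)]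
    simp [gb_zero, wp]
    rw [← pow_add]
    congr 1
    ring

theorem stmt18 (m : ℕ) (hm : 1 ≤ m) :
    ∃ L Linv D : Matrix (Fin m) (Fin m) (Polynomial ℤ),
      L * Linv = 1 ∧ Linv * L = 1 ∧
      (∀ i j : Fin m, i < j → L i j = 0) ∧ (∀ i : Fin m, L i i = 1) ∧
      (∀ i j : Fin m, i < j → Linv i j = 0) ∧ (∀ i : Fin m, Linv i i = 1) ∧
      (∀ i j : Fin m, j < i → D i j = 0) ∧
      (∀ j : Fin m, D j j =
        ∏ i ∈ Finset.range (j : ℕ), ((Polynomial.X : Polynomial ℤ) ^ (j : ℕ) - Polynomial.X ^ i)) ∧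
      (Matrix.of fun i j : Fin m => (Polynomial.X : Polynomial ℤ) ^ ((i : ℕ) * (j : ℕ)))
        = L * D := by
  classical
  set L : Matrix (Fin m) (Fin m) (Polynomial ℤ) := Matrix.of fun i j : Fin m => gb i j with hLdef
  set D : Matrix (Fin m) (Fin m) (Polynomial ℤ) :=
    Matrix.of fun k j : Fin m => gb j k * wp k with hDdef
  have hLtri : L.BlockTriangular OrderDual.toDual := by
    intro i j h
    exact gb_eq_zero (show (i : ℕ) < j from h)
  have hdet : L.det = 1 := by
    rw [Matrix.det_of_lowerTriangular L hLtri]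
    have : ∀ i : Fin m, L i i = 1 := fun i => gb_diag i
    simp [this]
  have hunit : IsUnit L.det := by rw [hdet]; exact isUnit_one
  have h1 : L * L⁻¹ = 1 := Matrix.mul_nonsing_inv L hunit
  have h2 : L⁻¹ * L = 1 := Matrix.nonsing_inv_mul L hunit
  haveI : Invertible L := L.invertibleOfIsUnitDet hunit
  have hinvtri : (L⁻¹).BlockTriangular OrderDual.toDual :=
    Matrix.blockTriangular_inv_of_blockTriangular hLtri
  refine ⟨L, L⁻¹, D, h1, h2, ?_, fun i => gb_diag i, ?_, ?_, ?_, ?_, ?_⟩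
  · intro i j h; exact hLtri h
  · intro i j h; exact hinvtri h
  · intro i
    have := congrFun (congrFun h2 i) i
    rw [Matrix.mul_apply] at this
    rw [Finset.sum_eq_single i] at this
    · rw [Matrix.one_apply_eq] at this
      have hLii : L i i = 1 := gb_diag i
      rw [hLii, mul_one] at this
      exact this
    · intro k _ hk
      rcases lt_or_gt_of_ne hk with hlt | hgt
      · have : L k i = 0 := gb_eq_zero (show (k : ℕ) < i from hlt)
        rw [this, mul_zero]
      · have : L⁻¹ i k = 0 := hinvtri (show (i : Fin m) < k from hgt)
        rw [this, zero_mul]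
    · intro h; exact absurd (Finset.mem_univ i) h
  · intro i j h
    show gb j i * wp i = 0
    rw [gb_eq_zero (show (j : ℕ) < i from h), zero_mul]
  · intro j
    show gb j j * wp j = _
    rw [gb_diag, one_mul]; rfl
  · apply Matrix.ext
    intro i j
    rw [Matrix.mul_apply]
    show (X : Polynomial ℤ) ^ ((i : ℕ) * j) = ∑ k : Fin m, gb i k * (gb j k * wp k)
    calc (X : Polynomial ℤ) ^ ((i : ℕ) * j)
        = ∑ k ∈ Finset.range ((i : ℕ) + 1), gb i k * (gb j k * wp k) := (key j i).symm
      _ = ∑ k ∈ Finset.range m, gb i k * (gb j k * wp k) := by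
          refine Finset.sum_subset (Finset.range_subset_range.2 i.isLt) ?_
          intro k _ hk
          rw [gb_eq_zero (show (i : ℕ) < k by simpa using hk), zero_mul]
      _ = ∑ k : Fin m, gb i k * (gb j k * wp k) :=
          (Fin.sum_univ_eq_sum_range (fun k => gb (i : ℕ) k * (gb (j : ℕ) k * wp k)) m).symm
end
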